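/- Assume Condition 1.2 and n ≥ 2. Then R[x_1, x_2^{±1},…,x_n^{±1}] ∩ R[x_1^{±1}, x_2, x'_2,…,x_n, x'_n] = R[x_1, x_2, x'_2,…,x_n, x'_n], as R-subalgebras of 𝔽; here R[x_1, x_2^{±1},…,x_n^{±1}] is generated by x_1 and x_i, x_i^{-1} (i ∈ [2,n]), R[x_1^{±1}, x_2, x'_2,…,x_n, x'_n] is generated by x_1, x_1^{-1} and x_i, x'_i (i ∈ [2,n]), and R[x_1, x_2, x'_2,…,x_n, x'_n] is generated by x_1 and x_i, x'_i (i ∈ [2,n]). -/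

import Mathlib

open MvPolynomial

/-- The ambient field `𝔽 = Frac(R[x_1, …, x_n])`. -/
noncomputable abbrev AmbientField (R : Type*) [CommRing R] [IsDomain R] (n : ℕ) :=
  FractionRing (MvPolynomial (Fin n) R)

/-- The cluster variable `x_i` viewed inside the ambient field. -/
noncomputable def xv (R : Type*) [CommRing R] [IsDomain R] {n : ℕ} (i : Fin n) :
    AmbientField R n :=
  algebraMap (MvPolynomial (Fin n) R) (AmbientField R n) (MvPolynomial.X i)

/-- The canonical embedding of polynomials into the ambient field. -/
noncomputable def toAmbient (R : Type*) [CommRing R] [IsDomain R] {n : ℕ}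
    (F : MvPolynomial (Fin n) R) : AmbientField R n :=
  algebraMap (MvPolynomial (Fin n) R) (AmbientField R n) F


namespace St11
open scoped Classical
set_option linter.unusedSectionVars false
set_option maxHeartbeats 1000000
variable {R : Type*} [CommRing R] [IsDomain R] {σ : Type*} [LinearOrder σ]

noncomputable def lmin (f : MvPolynomial σ R) : σ →₀ ℕ :=
  if h : f = 0 then 0 else
    ofLex ((f.support.image toLex).min'
      ((MvPolynomial.support_nonempty.2 h).image toLex))

theorem lmin_mem {f : MvPolynomial σ R} (h : f ≠ 0) : lmin f ∈ f.support := by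
  rw [lmin, dif_neg h]
  have := Finset.min'_mem (f.support.image toLex)
    ((MvPolynomial.support_nonempty.2 h).image toLex)
  rcases Finset.mem_image.1 this with ⟨d, hd, hd2⟩
  rwa [← hd2, ofLex_toLex]

theorem lmin_le {f : MvPolynomial σ R} {d : σ →₀ ℕ} (hd : d ∈ f.support) :
    toLex (lmin f) ≤ toLex d := by
  have h : f ≠ 0 := by rintro rfl; simp at hd
  rw [lmin, dif_neg h]
  simpa using Finset.min'_le (f.support.image toLex) (toLex d)
    (Finset.mem_image_of_mem toLex hd)

theorem coeff_lmin_ne_zero {f : MvPolynomial σ R} (h : f ≠ 0) :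
    coeff (lmin f) f ≠ 0 := by
  simpa [mem_support_iff] using lmin_mem h

theorem coeff_eq_zero_of_toLex_lt {f : MvPolynomial σ R} {d : σ →₀ ℕ}
    (hd : toLex d < toLex (lmin f)) : coeff d f = 0 := by
  by_contra h
  exact absurd (lmin_le (mem_support_iff.2 h)) (not_le.2 hd)

theorem mul_support_ge {f g : MvPolynomial σ R} {u : σ →₀ ℕ}
    (hu : u ∈ (f * g).support) : toLex (lmin f) + toLex (lmin g) ≤ toLex u := by
  rw [mem_support_iff, coeff_mul] at hu
  obtain ⟨⟨a, b⟩, hab, hne⟩ := Finset.exists_ne_zero_of_sum_ne_zero hu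
  rw [Finset.HasAntidiagonal.mem_antidiagonal] at hab
  have ha : a ∈ f.support := by
    rw [mem_support_iff]; intro h0; rw [h0] at hne; simp at hne
  have hb : b ∈ g.support := by
    rw [mem_support_iff]; intro h0; rw [h0] at hne; simp at hne
  calc toLex (lmin f) + toLex (lmin g) ≤ toLex a + toLex b :=
        add_le_add (lmin_le ha) (lmin_le hb)
    _ = toLex (a + b) := rfl
    _ = toLex u := by rw [hab]

theorem coeff_lmin_mul (f g : MvPolynomial σ R) :
    coeff (lmin f + lmin g) (f * g) = coeff (lmin f) f * coeff (lmin g) g := by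
  rw [coeff_mul]
  refine Finset.sum_eq_single_of_mem (lmin f, lmin g) (by rw [Finset.HasAntidiagonal.mem_antidiagonal]) ?_
  rintro ⟨a, b⟩ hab hne
  rw [Finset.HasAntidiagonal.mem_antidiagonal] at hab
  by_contra hc
  have ha : a ∈ f.support := by
    rw [mem_support_iff]; intro h0; rw [h0] at hc; simp at hc
  have hb : b ∈ g.support := by
    rw [mem_support_iff]; intro h0; rw [h0] at hc; simp at hc
  have h1 : toLex (lmin f) ≤ toLex a := lmin_le ha
  have h2 : toLex (lmin g) ≤ toLex b := lmin_le hb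
  have hsum : toLex a + toLex b = toLex (lmin f) + toLex (lmin g) := by
    show toLex (a + b) = toLex (lmin f + lmin g); rw [hab]
  have hae : toLex a = toLex (lmin f) := by
    rcases lt_or_eq_of_le h1 with hlt | he
    · exact absurd hsum (ne_of_gt (by
        calc toLex (lmin f) + toLex (lmin g) < toLex a + toLex b :=
          add_lt_add_of_lt_of_le hlt h2))
    · exact he.symm
  have haf : a = lmin f := by simpa using congrArg ofLex hae
  have hbg : b = lmin g := by
    have : toLex b = toLex (lmin g) := by
      have := hsum; rw [hae] at this; exact add_left_cancel this
    simpa using congrArg ofLex this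
  exact hne (by rw [haf, hbg])

theorem lmin_mul {f g : MvPolynomial σ R} (hf : f ≠ 0) (hg : g ≠ 0) :
    lmin (f * g) = lmin f + lmin g := by
  have hco : coeff (lmin f + lmin g) (f * g) ≠ 0 := by
    rw [coeff_lmin_mul]
    exact mul_ne_zero (coeff_lmin_ne_zero hf) (coeff_lmin_ne_zero hg)
  have h1 : toLex (lmin (f * g)) ≤ toLex (lmin f + lmin g) :=
    lmin_le (mem_support_iff.2 hco)
  have h2 : toLex (lmin f + lmin g) ≤ toLex (lmin (f * g)) := by
    have : f * g ≠ 0 := fun h0 => hco (by rw [h0]; simp)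
    exact mul_support_ge (lmin_mem this)
  have := le_antisymm h1 h2
  simpa using congrArg ofLex this

theorem lmin_monomial (u : σ →₀ ℕ) : lmin (monomial u (1 : R)) = u := by
  have h : (monomial u (1 : R)) ≠ 0 := by
    intro h; have := congrArg (coeff u) h; simp at this
  have h1 := lmin_mem h
  rw [support_monomial, if_neg (one_ne_zero)] at h1
  simpa using h1

theorem lmin_prod {ι : Type*} (T : Finset ι) (H : ι → MvPolynomial σ R)
    (hH : ∀ i ∈ T, H i ≠ 0) :
    (∏ i ∈ T, H i) ≠ 0 ∧ lmin (∏ i ∈ T, H i) = ∑ i ∈ T, lmin (H i) ∧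
      coeff (lmin (∏ i ∈ T, H i)) (∏ i ∈ T, H i) = ∏ i ∈ T, coeff (lmin (H i)) (H i) := by
  classical
  induction T using Finset.induction_on with
  | empty =>
      have h1 : (1 : MvPolynomial σ R) = monomial 0 1 := by simp [monomial_zero']
      have hl : lmin (1 : MvPolynomial σ R) = 0 := by rw [h1, lmin_monomial]
      refine ⟨one_ne_zero, ?_, ?_⟩ <;> simp [hl]
  | @insert a T hni ih =>
      have hHa : H a ≠ 0 := hH a (Finset.mem_insert_self a T)
      have hHT : ∀ i ∈ T, H i ≠ 0 := fun i hi => hH i (Finset.mem_insert_of_mem hi)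
      obtain ⟨hne, hlm, hco⟩ := ih hHT
      rw [Finset.prod_insert hni, Finset.sum_insert hni]
      refine ⟨mul_ne_zero hHa hne, ?_, ?_⟩
      · rw [lmin_mul hHa hne, hlm]
      · rw [lmin_mul hHa hne, coeff_lmin_mul, hco, Finset.prod_insert hni]

variable {R : Type*} [CommRing R] [IsDomain R] {m : ℕ}

noncomputable def ev0 (m : ℕ) (R : Type*) [CommRing R] :
    MvPolynomial (Fin (m+1)) R →ₐ[R] MvPolynomial (Fin (m+1)) R :=
  aeval (fun i => if i = 0 then 0 else X i)

theorem ev0_monomial (u : Fin (m+1) →₀ ℕ) (c : R) :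
    ev0 m R (monomial u c) = if u 0 = 0 then monomial u c else 0 := by
  classical
  rw [ev0, aeval_monomial]
  by_cases h : u 0 = 0
  · rw [if_pos h]
    have : (u.prod fun i e => (if i = 0 then 0 else X i) ^ e)
        = u.prod fun i e => (X i : MvPolynomial (Fin (m+1)) R) ^ e := by
      apply Finsupp.prod_congr
      intro i hi
      have : i ≠ 0 := by
        intro h0; rw [h0] at hi; exact (Finsupp.mem_support_iff.1 hi) h
      rw [if_neg this]
    rw [this, monomial_eq, algebraMap_eq]
  · rw [if_neg h]
    have h0 : (0 : Fin (m+1)) ∈ u.support := Finsupp.mem_support_iff.2 h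
    rw [Finsupp.prod]
    rw [← Finset.mul_prod_erase u.support
      (fun i => ((if i = 0 then 0 else X i) : MvPolynomial (Fin (m+1)) R) ^ u i) h0]
    simp [h]

theorem coeff_ev0 (p : MvPolynomial (Fin (m+1)) R) (d : Fin (m+1) →₀ ℕ) :
    coeff d (ev0 m R p) = if d 0 = 0 then coeff d p else 0 := by
  classical
  induction p using MvPolynomial.induction_on' with
  | monomial u c =>
      rw [ev0_monomial]
      by_cases hu : u 0 = 0
      · rw [if_pos hu]
        by_cases hd : d = u
        · subst hd; simp [coeff_monomial, hu]
        · simp [coeff_monomial, Ne.symm hd, hd]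
      · rw [if_neg hu]
        by_cases hd : d = u
        · subst hd; simp [coeff_monomial, hu]
        · simp [coeff_monomial, Ne.symm hd, hd]
  | add p q hp hq =>
      rw [map_add, coeff_add, hp, hq, coeff_add]
      by_cases hd : d 0 = 0 <;> simp [hd]

theorem ev0_support_subset (p : MvPolynomial (Fin (m+1)) R) :
    (ev0 m R p).support ⊆ p.support := by
  intro d hd
  rw [mem_support_iff, coeff_ev0] at hd
  rw [mem_support_iff]
  by_cases h : d 0 = 0
  · rw [if_pos h] at hd; exact hd
  · rw [if_neg h] at hd; exact absurd rfl hd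

theorem ev0_support_zero {p : MvPolynomial (Fin (m+1)) R} {d : Fin (m+1) →₀ ℕ}
    (hd : d ∈ (ev0 m R p).support) : d 0 = 0 := by
  rw [mem_support_iff, coeff_ev0] at hd
  by_contra h
  rw [if_neg h] at hd; exact hd rfl

theorem ev0_of_x0free {p : MvPolynomial (Fin (m+1)) R}
    (h : ∀ d ∈ p.support, d 0 = 0) : ev0 m R p = p := by
  ext d
  rw [coeff_ev0]
  by_cases hd : d 0 = 0
  · rw [if_pos hd]
  · rw [if_neg hd]
    by_contra hc
    exact hd (h d (mem_support_iff.2 fun h0 => hc h0.symm))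

theorem ev0_idem (p : MvPolynomial (Fin (m+1)) R) : ev0 m R (ev0 m R p) = ev0 m R p :=
  ev0_of_x0free (fun d hd => ev0_support_zero hd)

theorem X0_dvd_sub_ev0 (p : MvPolynomial (Fin (m+1)) R) :
    (X 0 : MvPolynomial (Fin (m+1)) R) ∣ (p - ev0 m R p) := by
  induction p using MvPolynomial.induction_on with
  | C a => simp [ev0]
  | add p q hp hq =>
      have : p + q - ev0 m R (p + q) = (p - ev0 m R p) + (q - ev0 m R q) := by
        rw [map_add]; ring
      rw [this]; exact dvd_add hp hq
  | mul_X p i hp =>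
      rw [map_mul]
      by_cases hi : i = 0
      · subst hi
        have : ev0 m R (X 0) = 0 := by simp [ev0]
        rw [this, mul_zero, sub_zero]
        exact Dvd.intro_left p rfl
      · have : ev0 m R (X i) = X i := by simp [ev0, hi]
        rw [this]
        have : p * X i - ev0 m R p * X i = (p - ev0 m R p) * X i := by ring
        rw [this]
        exact Dvd.dvd.mul_right hp _
theorem X0_dvd_iff_ev0 {p : MvPolynomial (Fin (m+1)) R} :
    (X 0 : MvPolynomial (Fin (m+1)) R) ∣ p ↔ ev0 m R p = 0 := by
  constructor
  · rintro ⟨q, rfl⟩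
    rw [map_mul]
    have : ev0 m R (X 0) = 0 := by simp [ev0]
    rw [this, zero_mul]
  · intro h
    have := X0_dvd_sub_ev0 (R := R) p
    rwa [h, sub_zero] at this


section ML
variable {R : Type*} [CommRing R] [IsDomain R] {m : ℕ}

theorem lmin_pow {σ : Type*} [LinearOrder σ] {f : MvPolynomial σ R} (hf : f ≠ 0) (e : ℕ) :
    f ^ e ≠ 0 ∧ lmin (f ^ e) = e • lmin f ∧
      coeff (lmin (f ^ e)) (f ^ e) = (coeff (lmin f) f) ^ e := by
  induction e with
  | zero =>
      have h1 : (1 : MvPolynomial σ R) = monomial 0 1 := by simp [monomial_zero']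
      have hl : lmin (1 : MvPolynomial σ R) = 0 := by rw [h1, lmin_monomial]
      refine ⟨by simp [pow_zero], by simp [pow_zero, hl], by simp [pow_zero, hl]⟩
  | succ e ih =>
      obtain ⟨hne, hlm, hco⟩ := ih
      rw [pow_succ]
      refine ⟨mul_ne_zero hne hf, ?_, ?_⟩
      · rw [lmin_mul hne hf, hlm, succ_nsmul]
      · rw [lmin_mul hne hf, coeff_lmin_mul, hco, pow_succ]

noncomputable def em (m : ℕ) (s : Fin m →₀ ℕ) : Fin (m+1) →₀ ℕ :=
  Finsupp.mapDomain Fin.succ s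

theorem em_succ (s : Fin m →₀ ℕ) (j : Fin m) : em m s (Fin.succ j) = s j :=
  Finsupp.mapDomain_apply (Fin.succ_injective m) s j

theorem em_zero (s : Fin m →₀ ℕ) : em m s 0 = 0 := by
  apply Finsupp.mapDomain_notin_range
  rintro ⟨j, hj⟩
  exact Fin.succ_ne_zero j hj

theorem em_add (s t : Fin m →₀ ℕ) : em m (s + t) = em m s + em m t :=
  Finsupp.mapDomain_add

variable (F : Fin (m+1) → MvPolynomial (Fin (m+1)) R)

noncomputable def Gp (k : Fin (m+1)) : MvPolynomial (Fin (m+1)) R := ev0 m R (F k)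

noncomputable def Gpow (s : Fin m →₀ ℕ) : MvPolynomial (Fin (m+1)) R :=
  ∏ j : Fin m, (Gp F (Fin.succ j)) ^ (s j)

noncomputable def Xm (m : ℕ) (R : Type*) [CommRing R] (t : Fin m →₀ ℕ) :
    MvPolynomial (Fin (m+1)) R := monomial (em m t) 1

variable (v : Fin (m+1) → Fin (m+1) →₀ ℕ)

noncomputable def vsum (s : Fin m →₀ ℕ) : Fin (m+1) →₀ ℕ :=
  ∑ j : Fin m, (s j) • v (Fin.succ j)

section hyps
variable (hvmem : ∀ k, v k ∈ (F k).support)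
  (hvmin : ∀ k, ∀ d ∈ (F k).support, toLex (v k) ≤ toLex d)
  (hc2 : ∀ k, ∀ i ≤ k, v k i = 0)

include hvmem hc2 in
theorem coeff_G_ne (k : Fin (m+1)) : coeff (v k) (Gp F k) ≠ 0 := by
  rw [Gp, coeff_ev0, if_pos (hc2 k 0 (Fin.zero_le k))]
  exact mem_support_iff.1 (hvmem k)

include hvmem hc2 in
theorem G_ne (k : Fin (m+1)) : Gp F k ≠ 0 := by
  intro h
  exact coeff_G_ne F v hvmem hc2 k (by rw [h]; simp)

include hvmem hvmin hc2 in
theorem lmin_G (k : Fin (m+1)) : lmin (Gp F k) = v k := by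
  have h1 : v k ∈ (Gp F k).support := mem_support_iff.2 (coeff_G_ne F v hvmem hc2 k)
  have h2 : toLex (lmin (Gp F k)) ≤ toLex (v k) := lmin_le h1
  have h3 : toLex (v k) ≤ toLex (lmin (Gp F k)) :=
    hvmin k _ (ev0_support_subset (F k) (lmin_mem (G_ne F v hvmem hc2 k)))
  have := le_antisymm h2 h3
  simpa using congrArg ofLex this

include hvmem hvmin hc2 in
theorem Gpow_facts (s : Fin m →₀ ℕ) :
    Gpow F s ≠ 0 ∧ lmin (Gpow F s) = vsum v s ∧
      coeff (lmin (Gpow F s)) (Gpow F s) ≠ 0 := by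
  have hfac : ∀ j : Fin m, (Gp F (Fin.succ j)) ^ (s j) ≠ 0 ∧
      lmin ((Gp F (Fin.succ j)) ^ (s j)) = (s j) • v (Fin.succ j) ∧
      coeff (lmin ((Gp F (Fin.succ j)) ^ (s j))) ((Gp F (Fin.succ j)) ^ (s j)) ≠ 0 := by
    intro j
    obtain ⟨h1, h2, h3⟩ := lmin_pow (G_ne F v hvmem hc2 (Fin.succ j)) (s j)
    refine ⟨h1, by rw [h2, lmin_G F v hvmem hvmin hc2], ?_⟩
    rw [h3]
    exact pow_ne_zero _ (coeff_lmin_ne_zero (G_ne F v hvmem hc2 (Fin.succ j)))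
  obtain ⟨h1, h2, h3⟩ := lmin_prod Finset.univ
    (fun j : Fin m => (Gp F (Fin.succ j)) ^ (s j)) (fun j _ => (hfac j).1)
  refine ⟨h1, ?_, ?_⟩
  · rw [Gpow, h2, vsum]
    exact Finset.sum_congr rfl (fun j _ => (hfac j).2.1)
  · rw [Gpow, h3]
    exact Finset.prod_ne_zero_iff.2 (fun j _ => (hfac j).2.2)

include hvmem hvmin hc2 in
theorem MLlex (S : Finset (Fin m →₀ ℕ)) (hS : S.Nonempty)
    (r : (Fin m →₀ ℕ) → MvPolynomial (Fin (m+1)) R)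
    (hr : ∀ s ∈ S, r s ≠ 0) (B : Fin m →₀ ℕ) (hB : ∀ s ∈ S, s ≤ B)
    (hrel : ∑ s ∈ S, r s * Gpow F s * Xm m R (B - s) = 0) :
    ∃ s ∈ S, ∃ κ : Fin m, s κ ≠ 0 ∧ lmin (r s) (Fin.succ κ) ≠ 0 := by
  classical
  set Lv : (Fin m →₀ ℕ) → (Fin (m+1) →₀ ℕ) :=
    fun s => lmin (r s) + vsum v s + em m (B - s) with hLv
  have hXm : ∀ t : Fin m →₀ ℕ, (Xm m R t) ≠ 0 ∧ lmin (Xm m R t) = em m t ∧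
      coeff (lmin (Xm m R t)) (Xm m R t) = 1 := by
    intro t
    have hne : (Xm m R t) ≠ 0 := by
      rw [Xm]; intro h
      have := congrArg (coeff (em m t)) h
      simp [coeff_monomial] at this
    refine ⟨hne, by rw [Xm, lmin_monomial], ?_⟩
    rw [Xm, lmin_monomial, coeff_monomial, if_pos rfl]
  have hterm : ∀ s ∈ S, (r s * Gpow F s * Xm m R (B - s)) ≠ 0 ∧
      lmin (r s * Gpow F s * Xm m R (B - s)) = Lv s ∧
      coeff (Lv s) (r s * Gpow F s * Xm m R (B - s)) ≠ 0 := by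
    intro s hs
    obtain ⟨hg1, hg2, hg3⟩ := Gpow_facts F v hvmem hvmin hc2 s
    obtain ⟨hx1, hx2, hx3⟩ := hXm (B - s)
    have hrs := hr s hs
    have hmul1 : r s * Gpow F s ≠ 0 := mul_ne_zero hrs hg1
    have hne : r s * Gpow F s * Xm m R (B - s) ≠ 0 := mul_ne_zero hmul1 hx1
    have hlm : lmin (r s * Gpow F s * Xm m R (B - s)) = Lv s := by
      rw [lmin_mul hmul1 hx1, lmin_mul hrs hg1, hg2, hx2, hLv]
    refine ⟨hne, hlm, ?_⟩
    rw [← hlm]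
    exact coeff_lmin_ne_zero hne
  set Γ : Lex (Fin (m+1) →₀ ℕ) := (S.image fun s => toLex (Lv s)).min' (hS.image _) with hΓ
  have hmin : ∀ s ∈ S, Γ ≤ toLex (Lv s) := by
    intro s hs
    exact Finset.min'_le _ _ (Finset.mem_image_of_mem _ hs)
  obtain ⟨s₀, hs₀S, hs₀⟩ := Finset.mem_image.1 (Finset.min'_mem (S.image fun s => toLex (Lv s)) (hS.image _))
  set E := S.filter (fun s => toLex (Lv s) = Γ) with hE
  have hs₀E : s₀ ∈ E := Finset.mem_filter.2 ⟨hs₀S, hs₀⟩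
  have hsum : ∑ s ∈ E, coeff (ofLex Γ) (r s * Gpow F s * Xm m R (B - s)) = 0 := by
    have h1 : ∑ s ∈ S, coeff (ofLex Γ) (r s * Gpow F s * Xm m R (B - s)) = 0 := by
      rw [← coeff_sum, hrel, coeff_zero]
    rw [← h1]
    apply Finset.sum_subset (Finset.filter_subset _ _)
    intro s hsS hsE
    have hne : toLex (Lv s) ≠ Γ := by
      intro h; exact hsE (Finset.mem_filter.2 ⟨hsS, h⟩)
    have hlt : toLex (ofLex Γ) < toLex (Lv s) := lt_of_le_of_ne (hmin s hsS) (Ne.symm hne)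
    rw [← (hterm s hsS).2.1] at hlt
    exact coeff_eq_zero_of_toLex_lt hlt
  -- now: coefficients on E are nonzero, equal Γ
  by_cases hcard : E.card ≤ 1
  · have : E = {s₀} := by
      apply Finset.eq_singleton_iff_unique_mem.2
      refine ⟨hs₀E, fun x hx => ?_⟩
      by_contra hne
      have : 1 < E.card := Finset.one_lt_card.2 ⟨x, hx, s₀, hs₀E, hne⟩
      omega
    have hoΓ : ofLex Γ = Lv s₀ := by
      rw [← (Finset.mem_filter.1 hs₀E).2, ofLex_toLex]
    rw [this, Finset.sum_singleton, hoΓ] at hsum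
    exact absurd hsum (hterm s₀ hs₀S).2.2
  · obtain ⟨s, hsE, s', hs'E, hne⟩ := Finset.one_lt_card.1 (not_le.1 hcard)
    have hsS : s ∈ S := (Finset.mem_filter.1 hsE).1
    have hs'S : s' ∈ S := (Finset.mem_filter.1 hs'E).1
    have hLeq : Lv s = Lv s' := by
      have h1 := (Finset.mem_filter.1 hsE).2
      have h2 := (Finset.mem_filter.1 hs'E).2
      have : toLex (Lv s) = toLex (Lv s') := by rw [h1, h2]
      simpa using congrArg ofLex this
    have hnefun : ∃ j, s j ≠ s' j := Finsupp.ne_iff.1 hne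
    set D := Finset.univ.filter (fun j : Fin m => s j ≠ s' j) with hD
    have hDne : D.Nonempty := by
      obtain ⟨j, hj⟩ := hnefun
      exact ⟨j, Finset.mem_filter.2 ⟨Finset.mem_univ j, hj⟩⟩
    set κ := D.min' hDne with hκ
    have hκD : κ ∈ D := Finset.min'_mem _ _
    have hκne : s κ ≠ s' κ := (Finset.mem_filter.1 hκD).2
    have hlow : ∀ j, j < κ → s j = s' j := by
      intro j hj
      by_contra hc
      exact absurd (Finset.min'_le D j (Finset.mem_filter.2 ⟨Finset.mem_univ j, hc⟩)) (not_le.2 hj)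
    -- evaluate the Lv equality at κ.succ
    have hvs : vsum v s (Fin.succ κ) = vsum v s' (Fin.succ κ) := by
      rw [vsum, vsum, Finsupp.finset_sum_apply, Finsupp.finset_sum_apply]
      apply Finset.sum_congr rfl
      intro j _
      rcases le_or_gt κ j with hle | hlt
      · have hz : v (Fin.succ j) (Fin.succ κ) = 0 :=
          hc2 (Fin.succ j) (Fin.succ κ) (Fin.succ_le_succ_iff.2 hle)
        simp [hz]
      · rw [hlow j hlt]
    have hcomp := congrArg (fun w => w (Fin.succ κ)) hLeq
    simp only [hLv, Finsupp.add_apply] at hcomp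
    rw [hvs] at hcomp
    have hBs : em m (B - s) (Fin.succ κ) = B κ - s κ := by
      rw [em_succ, Finsupp.tsub_apply]
    have hBs' : em m (B - s') (Fin.succ κ) = B κ - s' κ := by
      rw [em_succ, Finsupp.tsub_apply]
    rw [hBs, hBs'] at hcomp
    have hsB : s κ ≤ B κ := (Finsupp.le_def.1 (hB s hsS)) κ
    have hs'B : s' κ ≤ B κ := (Finsupp.le_def.1 (hB s' hs'S)) κ
    rcases Nat.lt_or_ge (s' κ) (s κ) with hgt | hge
    · exact ⟨s, hsS, κ, by omega, by omega⟩
    · have : s' κ > s κ := by omega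
      exact ⟨s', hs'S, κ, by omega, by omega⟩
end hyps
end ML

section CORE
variable {R : Type*} [CommRing R] [IsDomain R] {m : ℕ}

local notation "Pm" => MvPolynomial (Fin (m+1)) R
local notation "Km" => FractionRing (MvPolynomial (Fin (m+1)) R)

noncomputable def phi (R : Type*) [CommRing R] [IsDomain R] (m : ℕ) :
    MvPolynomial (Fin (m+1)) R →+* FractionRing (MvPolynomial (Fin (m+1)) R) :=
  algebraMap _ _

theorem phi_inj : Function.Injective (phi R m) := IsFractionRing.injective _ _

theorem phiX_ne (i : Fin (m+1)) : phi R m (X i) ≠ 0 := by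
  intro h
  have : (X i : Pm) = 0 := phi_inj (by rw [h]; simp [phi])
  exact MvPolynomial.X_ne_zero i this

variable (F : Fin (m+1) → MvPolynomial (Fin (m+1)) R)

noncomputable def xpr (j : Fin m) : Km :=
  phi R m (F (Fin.succ j)) * (phi R m (X (Fin.succ j)))⁻¹

noncomputable def Psi : MvPolynomial (Fin m) Pm →ₐ[Pm] Km :=
  aeval (xpr F)

theorem key_id (j : Fin m) :
    phi R m (X (Fin.succ j)) * xpr F j = phi R m (F (Fin.succ j)) := by
  rw [xpr]
  field_simp [phiX_ne]

noncomputable def xp (s : Fin m →₀ ℕ) : Km := ∏ j : Fin m, (xpr F j) ^ (s j)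

theorem xp_add (s t : Fin m →₀ ℕ) : xp F (s + t) = xp F s * xp F t := by
  rw [xp, xp, xp, ← Finset.prod_mul_distrib]
  exact Finset.prod_congr rfl fun j _ => by rw [Finsupp.add_apply, pow_add]

theorem xp_single (κ : Fin m) : xp F (Finsupp.single κ 1) = xpr F κ := by
  rw [xp]
  rw [Finset.prod_eq_single κ]
  · simp
  · intro j _ hj; simp [Finsupp.single_apply, Ne.symm hj]
  · intro h; exact absurd (Finset.mem_univ κ) h

theorem Psi_monomial (s : Fin m →₀ ℕ) (c : Pm) :
    Psi F (monomial s c) = phi R m c * xp F s := by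
  rw [Psi, aeval_monomial, xp]
  congr 1
  rw [Finsupp.prod_fintype]
  intro j; exact pow_zero _

theorem Psi_C (c : Pm) : Psi F (C c) = phi R m c := by
  rw [Psi, aeval_C]; rfl

theorem Psi_X (j : Fin m) : Psi F (X j) = xpr F j := by
  rw [Psi]; exact aeval_X (xpr F) j

noncomputable def Fpow (s : Fin m →₀ ℕ) : Pm := ∏ j : Fin m, (F (Fin.succ j)) ^ (s j)

noncomputable def Qp (w : MvPolynomial (Fin m) Pm) (B : Fin m →₀ ℕ) : Pm :=
  ∑ s ∈ w.support, (coeff s w) * Fpow F s * Xm m R (B - s)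

theorem Xm_eq_prod (t : Fin m →₀ ℕ) :
    Xm m R t = ∏ j : Fin m, (X (Fin.succ j) : Pm) ^ (t j) := by
  rw [Xm, monomial_eq, map_one, one_mul, em]
  rw [Finsupp.prod_mapDomain_index_inj (Fin.succ_injective m)]
  rw [Finsupp.prod_fintype]
  intro j; exact pow_zero _

theorem Xm_mul {s B : Fin m →₀ ℕ} (h : s ≤ B) :
    Xm m R s * Xm m R (B - s) = Xm m R B := by
  rw [Xm, Xm, Xm, monomial_mul, mul_one, ← em_add, add_tsub_cancel_of_le h]

theorem phi_Fpow (s : Fin m →₀ ℕ) :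
    phi R m (Fpow F s) = xp F s * phi R m (Xm m R s) := by
  rw [Fpow, map_prod, Xm_eq_prod, map_prod, xp, ← Finset.prod_mul_distrib]
  apply Finset.prod_congr rfl
  intro j _
  rw [map_pow, map_pow, ← mul_pow]
  congr 1
  rw [mul_comm (xpr F j), key_id]

theorem phi_Qp (w : MvPolynomial (Fin m) Pm) (B : Fin m →₀ ℕ)
    (hB : ∀ s ∈ w.support, s ≤ B) :
    phi R m (Qp F w B) = Psi F w * phi R m (Xm m R B) := by
  have hexp : Psi F w = ∑ s ∈ w.support, phi R m (coeff s w) * xp F s := by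
    conv_lhs => rw [as_sum w]
    rw [map_sum]
    exact Finset.sum_congr rfl fun s _ => Psi_monomial F s _
  rw [Qp, map_sum, hexp, Finset.sum_mul]
  apply Finset.sum_congr rfl
  intro s hs
  rw [map_mul, map_mul, phi_Fpow]
  rw [show phi R m (coeff s w) * (xp F s * phi R m (Xm m R s)) * phi R m (Xm m R (B - s))
      = phi R m (coeff s w) * xp F s * phi R m (Xm m R s * Xm m R (B - s)) by
    rw [map_mul]; ring]
  rw [Xm_mul (hB s hs)]

theorem ev0_Xm (t : Fin m →₀ ℕ) : ev0 m R (Xm m R t) = Xm m R t := by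
  rw [Xm, ev0_monomial, if_pos (em_zero t)]

theorem ev0_Fpow (s : Fin m →₀ ℕ) : ev0 m R (Fpow F s) = Gpow F s := by
  rw [Fpow, map_prod, Gpow]
  exact Finset.prod_congr rfl fun j _ => by rw [map_pow, Gp]

theorem ev0_Qp (w : MvPolynomial (Fin m) Pm) (B : Fin m →₀ ℕ) :
    ev0 m R (Qp F w B) =
      ∑ s ∈ w.support, (ev0 m R (coeff s w)) * Gpow F s * Xm m R (B - s) := by
  rw [Qp, map_sum]
  exact Finset.sum_congr rfl fun s _ => by rw [map_mul, map_mul, ev0_Fpow, ev0_Xm]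
end CORE

section COREIND
variable {R : Type*} [CommRing R] [IsDomain R] {m : ℕ}

local notation "Pm" => MvPolynomial (Fin (m+1)) R
local notation "Km" => FractionRing (MvPolynomial (Fin (m+1)) R)

theorem coeff_msum {σ' : Type*} {R' : Type*} [CommRing R'] (T : Finset (σ' →₀ ℕ))
    (c : (σ' →₀ ℕ) → R') (e : σ' →₀ ℕ) :
    coeff e (∑ d ∈ T, monomial d (c d)) = if e ∈ T then c e else 0 := by
  classical
  rw [coeff_sum]
  rw [show (∑ d ∈ T, coeff e (monomial d (c d))) = ∑ d ∈ T, if d = e then c d else 0 from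
    Finset.sum_congr rfl fun d _ => coeff_monomial e d (c d)]
  rw [Finset.sum_ite_eq' T e c]

theorem support_msum {σ' : Type*} {R' : Type*} [CommRing R'] (T : Finset (σ' →₀ ℕ))
    (c : (σ' →₀ ℕ) → R') :
    (∑ d ∈ T, monomial d (c d)).support ⊆ T := by
  intro e he
  rw [mem_support_iff, coeff_msum] at he
  by_contra h
  rw [if_neg h] at he; exact he rfl

theorem split_exists (r : Pm) (k : Fin (m+1)) :
    ∃ gb g2 : Pm, X k * gb + g2 = r ∧
      g2.support ⊆ r.support.filter (fun d => d k = 0) := by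
  classical
  refine ⟨∑ d ∈ r.support.filter (fun d => ¬ d k = 0),
      monomial (d - Finsupp.single k 1) (coeff d r),
    ∑ d ∈ r.support.filter (fun d => d k = 0), monomial d (coeff d r), ?_,
    support_msum _ _⟩
  have hX : ∀ d ∈ r.support.filter (fun d => ¬ d k = 0),
      X k * monomial (d - Finsupp.single k 1) (coeff d r) = monomial d (coeff d r) := by
    intro d hd
    have hdk : d k ≠ 0 := (Finset.mem_filter.1 hd).2
    have heq : Finsupp.single k 1 + (d - Finsupp.single k 1) = d := by
      ext i
      rcases eq_or_ne i k with rfl | hik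
      · rw [Finsupp.add_apply, Finsupp.tsub_apply, Finsupp.single_eq_same]
        omega
      · simp [Finsupp.single_apply, Finsupp.tsub_apply, Ne.symm hik]
    rw [← heq, monomial_single_add, pow_one, heq]
  rw [Finset.mul_sum, Finset.sum_congr rfl hX]
  have h2 := Finset.sum_filter_add_sum_filter_not r.support (fun d => d k = 0)
      (fun d => monomial d (coeff d r))
  rw [← as_sum r] at h2
  exact (add_comm _ _).trans h2

theorem sum_lt_of_update {α : Type*} [DecidableEq α] (T T' : Finset α) (f f' : α → ℕ)
    (a : α) (haT : a ∈ T) (hsub : T' ⊆ T) (heq : ∀ x ∈ T', x ≠ a → f' x = f x)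
    (hfa : f' a < f a) : ∑ x ∈ T', f' x < ∑ x ∈ T, f x := by
  classical
  by_cases haT' : a ∈ T'
  · rw [← Finset.add_sum_erase _ _ haT', ← Finset.add_sum_erase _ _ haT]
    have h1 : ∑ x ∈ T'.erase a, f' x = ∑ x ∈ T'.erase a, f x :=
      Finset.sum_congr rfl fun x hx =>
        heq x (Finset.mem_of_mem_erase hx) (Finset.ne_of_mem_erase hx)
    rw [h1]
    exact add_lt_add_of_lt_of_le hfa
      (Finset.sum_le_sum_of_subset (Finset.erase_subset_erase a hsub))
  · have h1 : ∑ x ∈ T', f' x = ∑ x ∈ T', f x :=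
      Finset.sum_congr rfl fun x hx => heq x hx (fun h => haT' (h ▸ hx))
    have h2 : T' ⊆ T.erase a := fun x hx =>
      Finset.mem_erase.2 ⟨fun h => haT' (h ▸ hx), hsub hx⟩
    calc ∑ x ∈ T', f' x = ∑ x ∈ T', f x := h1
      _ ≤ ∑ x ∈ T.erase a, f x := Finset.sum_le_sum_of_subset h2
      _ < f a + ∑ x ∈ T.erase a, f x := by omega
      _ = ∑ x ∈ T, f x := Finset.add_sum_erase _ _ haT

noncomputable def degf (s : Fin m →₀ ℕ) : ℕ := ∑ j : Fin m, s j

theorem degf_mono {s B : Fin m →₀ ℕ} (h : s ≤ B) : degf s ≤ degf B :=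
  Finset.sum_le_sum fun j _ => Finsupp.le_def.1 h j

theorem degf_add (s t : Fin m →₀ ℕ) : degf (s + t) = degf s + degf t := by
  rw [degf, degf, degf, ← Finset.sum_add_distrib]
  exact Finset.sum_congr rfl fun j _ => Finsupp.add_apply s t j

theorem degf_single (κ : Fin m) : degf (Finsupp.single κ 1) = 1 := by
  rw [degf]
  rw [Finset.sum_eq_single κ]
  · simp
  · intro j _ hj; simp [Finsupp.single_apply, Ne.symm hj]
  · intro h; exact absurd (Finset.mem_univ κ) h

noncomputable def tj (w : MvPolynomial (Fin m) Pm) (j : ℕ) : ℕ :=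
  ∑ s ∈ w.support.filter (fun s => degf s = j), (ev0 m R (coeff s w)).support.card
end COREIND

section MAINCORE
variable {R : Type*} [CommRing R] [IsDomain R] {m : ℕ}

local notation "Pm" => MvPolynomial (Fin (m+1)) R
local notation "Km" => FractionRing (MvPolynomial (Fin (m+1)) R)

theorem core (F : Fin (m+1) → Pm) (v : Fin (m+1) → Fin (m+1) →₀ ℕ)
    (hvmem : ∀ k, v k ∈ (F k).support)
    (hvmin : ∀ k, ∀ d ∈ (F k).support, toLex (v k) ≤ toLex d)
    (hc2 : ∀ k, ∀ i ≤ k, v k i = 0) (B : Fin m →₀ ℕ) :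
    ∀ w : MvPolynomial (Fin m) Pm, (∀ s ∈ w.support, s ≤ B) →
      ((X 0 : Pm) ∣ Qp F w B) → ∃ w', Psi F w = phi R m (X 0) * Psi F w' := by
  classical
  set D := degf B with hD
  set meas : MvPolynomial (Fin m) Pm → Lex (Fin (D+1) →₀ ℕ) :=
    fun w => toLex (Finsupp.equivFunOnFinite.symm
      (fun i : Fin (D+1) => tj w (D - (i : ℕ)))) with hmeasdef
  have hmeas_apply : ∀ w (i : Fin (D+1)), ofLex (meas w) i = tj w (D - (i : ℕ)) := by
    intro w i
    simp [hmeasdef]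
  have wfI : WellFoundedLT (Lex (Fin (D+1) →₀ ℕ)) := Finsupp.Lex.wellFoundedLT_of_finite
  have MAIN : ∀ μ₀ : Lex (Fin (D+1) →₀ ℕ), ∀ w : MvPolynomial (Fin m) Pm, meas w = μ₀ →
      (∀ s ∈ w.support, s ≤ B) → ((X 0 : Pm) ∣ Qp F w B) →
      ∃ w', Psi F w = phi R m (X 0) * Psi F w' := by
    intro μ₀
    induction μ₀ using WellFounded.induction wfI.wf with
    | _ μ IH =>
    intro w hmeas hsupp hdvd
    by_cases hall : ∀ s ∈ w.support, ev0 m R (coeff s w) = 0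
    · have hdvdC : (C (X 0 : Pm) : MvPolynomial (Fin m) Pm) ∣ w := by
        rw [C_dvd_iff_dvd_coeff]
        intro s
        by_cases hs : s ∈ w.support
        · exact X0_dvd_iff_ev0.2 (hall s hs)
        · rw [notMem_support_iff.1 hs]; exact dvd_zero _
      obtain ⟨w', rfl⟩ := hdvdC
      exact ⟨w', by rw [map_mul, Psi_C]⟩
    · push_neg at hall
      obtain ⟨s₁, hs₁supp, hs₁ne⟩ := hall
      set S' := w.support.filter (fun s => ev0 m R (coeff s w) ≠ 0) with hS'
      have hS'ne : S'.Nonempty := ⟨s₁, Finset.mem_filter.2 ⟨hs₁supp, hs₁ne⟩⟩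
      have hS'sub : S' ⊆ w.support := Finset.filter_subset _ _
      have hrel : ∑ s ∈ S', (ev0 m R (coeff s w)) * Gpow F s * Xm m R (B - s) = 0 := by
        have h0 : ev0 m R (Qp F w B) = 0 := X0_dvd_iff_ev0.1 hdvd
        rw [ev0_Qp] at h0
        rw [← h0]
        apply Finset.sum_subset hS'sub
        intro s hsw hsS'
        have : ev0 m R (coeff s w) = 0 := by
          by_contra hc
          exact hsS' (Finset.mem_filter.2 ⟨hsw, hc⟩)
        rw [this, zero_mul, zero_mul]
      obtain ⟨sst, hsstS', κ, hκ0, hκl⟩ := MLlex F v hvmem hvmin hc2 S' hS'ne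
        (fun s => ev0 m R (coeff s w)) (fun s hs => (Finset.mem_filter.1 hs).2)
        B (fun s hs => hsupp s (hS'sub hs)) hrel
      set k := Fin.succ κ with hk
      set p := coeff sst w with hp0
      set rp := ev0 m R p with hrp0
      have hsstsupp : sst ∈ w.support := hS'sub hsstS'
      have hrpne : rp ≠ 0 := (Finset.mem_filter.1 hsstS').2
      obtain ⟨gb, g2, hsplit, hg2supp⟩ := split_exists rp k
      obtain ⟨hq, hhq⟩ := X0_dvd_sub_ev0 (R := R) p
      have hpdec : p = X k * gb + g2 + X 0 * hq := by
        rw [sub_eq_iff_eq_add] at hhq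
        rw [hhq, ← hrp0, ← hsplit]; ring
      have hsingle_le : Finsupp.single κ 1 ≤ sst := by
        rw [Finsupp.single_le_iff]; omega
      set s2 := sst - Finsupp.single κ 1 with hs2def
      have hs2add : s2 + Finsupp.single κ 1 = sst := tsub_add_cancel_of_le hsingle_le
      have hdegsst : degf s2 + 1 = degf sst := by
        rw [← hs2add, degf_add, degf_single]
      have hs2ne : s2 ≠ sst := fun h => by rw [h] at hdegsst; omega
      set w' := w + monomial sst (g2 + X 0 * hq - p) + monomial s2 (gb * F k) with hw'
      have hxps : xp F sst = xp F s2 * xpr F κ := by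
        rw [← hs2add, xp_add, xp_single]
      have hPsi : Psi F w' = Psi F w := by
        rw [hw', map_add, map_add, Psi_monomial, Psi_monomial]
        have h1 : g2 + X 0 * hq - p = -(X k * gb) := by rw [hpdec]; ring
        have h2 : phi R m (X k * gb) * xp F sst = phi R m (gb * F k) * xp F s2 := by
          rw [map_mul, map_mul, hxps]
          calc phi R m (X k) * phi R m gb * (xp F s2 * xpr F κ)
              = phi R m gb * xp F s2 * (phi R m (X k) * xpr F κ) := by ring
            _ = phi R m gb * xp F s2 * phi R m (F k) := by rw [key_id]
            _ = phi R m gb * phi R m (F k) * xp F s2 := by ring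
        rw [h1, map_neg, neg_mul, h2]
        ring
      have hsupp' : ∀ s ∈ w'.support, s ≤ B := by
        intro s hs
        rw [hw'] at hs
        rcases Finset.mem_union.1 (support_add hs) with hs' | hs'
        · rcases Finset.mem_union.1 (support_add hs') with hs'' | hs''
          · exact hsupp s hs''
          · have : s = sst := by simpa using support_monomial_subset hs''
            rw [this]; exact hsupp sst hsstsupp
        · have : s = s2 := by simpa using support_monomial_subset hs'
          rw [this]
          exact le_trans tsub_le_self (hsupp sst hsstsupp)
      have hQeq : Qp F w' B = Qp F w B :=
        phi_inj (by rw [phi_Qp F w' B hsupp', phi_Qp F w B hsupp, hPsi])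
      have hdvd' : (X 0 : Pm) ∣ Qp F w' B := by rw [hQeq]; exact hdvd
      have hcsst : coeff sst w' = g2 + X 0 * hq := by
        rw [hw', coeff_add, coeff_add, coeff_monomial, coeff_monomial,
          if_pos rfl, if_neg hs2ne, add_zero, ← hp0]
        ring
      have hcother : ∀ s, s ≠ sst → s ≠ s2 → coeff s w' = coeff s w := by
        intro s h1 h2
        rw [hw', coeff_add, coeff_add, coeff_monomial, coeff_monomial,
          if_neg (Ne.symm h1), if_neg (Ne.symm h2), add_zero, add_zero]
      have hev0sst : ev0 m R (coeff sst w') = g2 := by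
        rw [hcsst, map_add]
        have h1 : ev0 m R (X 0 * hq) = 0 := X0_dvd_iff_ev0.1 (dvd_mul_right _ _)
        have h2 : ev0 m R g2 = g2 := by
          apply ev0_of_x0free
          intro d hd
          exact ev0_support_zero (Finset.mem_filter.1 (hg2supp hd)).1
        rw [h1, h2, add_zero]
      have hcard : g2.support.card < rp.support.card := by
        have hlmem : lmin rp ∈ rp.support := lmin_mem hrpne
        have hlnot : lmin rp ∉ rp.support.filter (fun d => d k = 0) := by
          intro hmem
          exact hκl (Finset.mem_filter.1 hmem).2
        have hss : rp.support.filter (fun d => d k = 0) ⊂ rp.support :=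
          (Finset.ssubset_iff_of_subset (Finset.filter_subset _ _)).2 ⟨lmin rp, hlmem, hlnot⟩
        exact lt_of_le_of_lt (Finset.card_le_card hg2supp) (Finset.card_lt_card hss)
      have hdegsstD : degf sst ≤ D := hD ▸ degf_mono (hsupp sst hsstsupp)
      have htj_eq : ∀ j', degf sst < j' → tj w' j' = tj w j' := by
        intro j' hj'
        rw [tj, tj]
        have hsets : w'.support.filter (fun s => degf s = j')
            = w.support.filter (fun s => degf s = j') := by
          ext s
          simp only [Finset.mem_filter]
          constructor
          · rintro ⟨hs, hdeg⟩
            have hne1 : s ≠ sst := fun h => by rw [h] at hdeg; omega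
            have hne2 : s ≠ s2 := fun h => by rw [h] at hdeg; omega
            refine ⟨?_, hdeg⟩
            rw [mem_support_iff] at hs ⊢
            rwa [hcother s hne1 hne2] at hs
          · rintro ⟨hs, hdeg⟩
            have hne1 : s ≠ sst := fun h => by rw [h] at hdeg; omega
            have hne2 : s ≠ s2 := fun h => by rw [h] at hdeg; omega
            refine ⟨?_, hdeg⟩
            rw [mem_support_iff] at hs ⊢
            rwa [hcother s hne1 hne2]
        rw [hsets]
        apply Finset.sum_congr rfl
        intro s hs
        have hdeg := (Finset.mem_filter.1 hs).2
        have hne1 : s ≠ sst := fun h => by rw [h] at hdeg; omega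
        have hne2 : s ≠ s2 := fun h => by rw [h] at hdeg; omega
        rw [hcother s hne1 hne2]
      have htj_lt : tj w' (degf sst) < tj w (degf sst) := by
        rw [tj, tj]
        apply sum_lt_of_update _ _ _ _ sst
        · exact Finset.mem_filter.2 ⟨hsstsupp, rfl⟩
        · intro s hs
          obtain ⟨hs1, hsdeg⟩ := Finset.mem_filter.1 hs
          by_cases hcase : s = sst
          · rw [hcase]; exact Finset.mem_filter.2 ⟨hsstsupp, rfl⟩
          · have hne2 : s ≠ s2 := fun h => by rw [h] at hsdeg; omega
            refine Finset.mem_filter.2 ⟨?_, hsdeg⟩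
            rw [mem_support_iff] at hs1 ⊢
            rwa [hcother s hcase hne2] at hs1
        · intro x hx hxne
          obtain ⟨_, hdegx⟩ := Finset.mem_filter.1 hx
          have hne2 : x ≠ s2 := fun h => by rw [h] at hdegx; omega
          rw [hcother x hxne hne2]
        · rw [hev0sst]
          exact hcard
      have hlt : meas w' < μ := by
        rw [← hmeas]
        apply Finsupp.Lex.lt_iff.2
        have hDsub : D - degf sst < D + 1 := by omega
        refine ⟨⟨D - degf sst, hDsub⟩, ?_, ?_⟩
        · intro j hj
          rw [hmeas_apply, hmeas_apply]
          apply htj_eq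
          have hjlt : (j : ℕ) < D - degf sst := hj
          omega
        · rw [hmeas_apply, hmeas_apply]
          have hDD : D - (D - degf sst) = degf sst := by omega
          simp only []
          rw [hDD]
          exact htj_lt
      obtain ⟨w'', hww⟩ := IH (meas w') hlt w' rfl hsupp' hdvd'
      exact ⟨w'', by rw [← hPsi, hww]⟩
  intro w hsupp hdvd
  exact MAIN (meas w) w rfl hsupp hdvd
end MAINCORE

end St11

set_option maxHeartbeats 2000000 in
open St11 in
/-- Under Condition 1.2 and `n ≥ 2`,
`R[x_1, x_2^{±1},…,x_n^{±1}] ∩ R[x_1^{±1}, x_2, x'_2,…,x_n, x'_n]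
  = R[x_1, x_2, x'_2,…,x_n, x'_n]`. -/
theorem statement11 {R : Type*} [CommRing R] [IsDomain R] [UniqueFactorizationMonoid R]
    {n : ℕ} [NeZero n] (hn : 2 ≤ n)
    (F : Fin n → MvPolynomial (Fin n) R)
    -- `F k` does not involve `x_k`
    (hFx : ∀ k, ∀ m ∈ (F k).support, m k = 0)
    -- each `F k` is irreducible in `R[x_1,…,x_n]`
    (hFirr : ∀ k, Irreducible (F k))
    -- no `F k` is divisible by a variable
    (hFvar : ∀ k i, ¬ (MvPolynomial.X i ∣ F k))
    -- `x'_k = F_k / x_k` (encoding `F̂_k = F_k`)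
    (x' : Fin n → AmbientField R n)
    (hx' : ∀ k, x' k = toAmbient R (F k) / xv R k)
    -- `v k` is the lexicographically smallest monomial `M_k` of `F k`
    (v : Fin n → (Fin n →₀ ℕ))
    (hvmem : ∀ k, v k ∈ (F k).support)
    (hvmin : ∀ k, ∀ m ∈ (F k).support, toLex (v k) ≤ toLex m)
    -- Condition 1.2 (i)
    (hcond1 : ∀ k j, j ≠ k →
      ¬ (Polynomial.C (F j) ∣
          MvPolynomial.aeval
            (fun i => if i = j then Polynomial.C (F j) * Polynomial.X
                      else Polynomial.C (MvPolynomial.X i)) (F k)))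
    -- Condition 1.2 (ii)
    (hcond2 : ∀ k, ∀ i ≤ k, v k i = 0)
    -- Condition 1.2 (iii)
    (hcond3 : ∀ k, k ≠ 0 → (∃ m ∈ (F k).support, m 0 ≠ 0) →
      ∀ m ∈ (F k).support, m ≠ v k → m 0 ≠ 0)
    -- Condition 1.2 (iv)
    (hcond4 : ∀ k, k ≠ 0 → k ≠ 1 → (∀ m ∈ (F k).support, m 0 = 0) →
      ∀ i : Fin n, i ≠ 0 → i < k → v i k ≠ 0 →
        ∀ m ∈ (F k).support, m ≠ v k → m i ≠ 0) :
    (Algebra.adjoin R (({xv R 0} : Set (AmbientField R n)) ∪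
        ⋃ i ∈ ({i : Fin n | i ≠ 0}), ({xv R i, (xv R i)⁻¹} : Set (AmbientField R n)))) ⊓
      (Algebra.adjoin R (({xv R 0, (xv R 0)⁻¹} : Set (AmbientField R n)) ∪
        ⋃ i ∈ ({i : Fin n | i ≠ 0}), ({xv R i, x' i} : Set (AmbientField R n)))) =
    Algebra.adjoin R (({xv R 0} : Set (AmbientField R n)) ∪
        ⋃ i ∈ ({i : Fin n | i ≠ 0}), ({xv R i, x' i} : Set (AmbientField R n))) := by
  classical
  obtain ⟨m, rfl⟩ : ∃ m, n = m + 1 := ⟨n - 1, by omega⟩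
  -- basic identifications
  have hxv : ∀ i, xv R i = phi R m (X i) := fun i => rfl
  have hxpr : ∀ j : Fin m, x' (Fin.succ j) = xpr F j := by
    intro j
    rw [hx' (Fin.succ j), xpr, div_eq_mul_inv]
    rfl
  set SA : Set (AmbientField R (m+1)) := ({xv R 0} ∪
    ⋃ i ∈ ({i : Fin (m+1) | i ≠ 0}), ({xv R i, x' i} : Set (AmbientField R (m+1)))) with hSA
  set SL : Set (AmbientField R (m+1)) := ({xv R 0} ∪
    ⋃ i ∈ ({i : Fin (m+1) | i ≠ 0}), ({xv R i, (xv R i)⁻¹} : Set (AmbientField R (m+1)))) with hSL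
  set SU : Set (AmbientField R (m+1)) := ({xv R 0, (xv R 0)⁻¹} ∪
    ⋃ i ∈ ({i : Fin (m+1) | i ≠ 0}), ({xv R i, x' i} : Set (AmbientField R (m+1)))) with hSU
  -- membership of the variables in each adjoin
  have hmemA_xv : ∀ i, xv R i ∈ Algebra.adjoin R SA := by
    intro i
    apply Algebra.subset_adjoin
    by_cases hi : i = 0
    · subst hi; exact Set.mem_union_left _ rfl
    · refine Set.mem_union_right _ ?_
      simp only [Set.mem_iUnion, Set.mem_setOf_eq]
      exact ⟨i, hi, Set.mem_insert _ _⟩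
  have hmemA_x' : ∀ i, i ≠ (0 : Fin (m+1)) → x' i ∈ Algebra.adjoin R SA := by
    intro i hi
    apply Algebra.subset_adjoin
    refine Set.mem_union_right _ ?_
    simp only [Set.mem_iUnion, Set.mem_setOf_eq]
    exact ⟨i, hi, Set.mem_insert_of_mem _ rfl⟩
  have hmemL_xv : ∀ i, xv R i ∈ Algebra.adjoin R SL := by
    intro i
    apply Algebra.subset_adjoin
    by_cases hi : i = 0
    · subst hi; exact Set.mem_union_left _ rfl
    · refine Set.mem_union_right _ ?_
      simp only [Set.mem_iUnion, Set.mem_setOf_eq]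
      exact ⟨i, hi, Set.mem_insert _ _⟩
  have hmemL_inv : ∀ i, i ≠ (0 : Fin (m+1)) → (xv R i)⁻¹ ∈ Algebra.adjoin R SL := by
    intro i hi
    apply Algebra.subset_adjoin
    refine Set.mem_union_right _ ?_
    simp only [Set.mem_iUnion, Set.mem_setOf_eq]
    exact ⟨i, hi, Set.mem_insert_of_mem _ rfl⟩
  -- phi of any polynomial lands in any subalgebra containing the variables
  have hphi_mem : ∀ (T : Subalgebra R (AmbientField R (m+1))), (∀ i, xv R i ∈ T) →
      ∀ p : MvPolynomial (Fin (m+1)) R, phi R m p ∈ T := by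
    intro T hT p
    induction p using MvPolynomial.induction_on with
    | C r =>
        have : phi R m (MvPolynomial.C r) = algebraMap R (AmbientField R (m+1)) r := by
          rw [show (MvPolynomial.C r : MvPolynomial (Fin (m+1)) R)
              = algebraMap R (MvPolynomial (Fin (m+1)) R) r from rfl]
          exact (IsScalarTower.algebraMap_apply R (MvPolynomial (Fin (m+1)) R) (AmbientField R (m+1)) r).symm
        rw [this]
        exact Subalgebra.algebraMap_mem T r
    | add p q hp hq => rw [map_add]; exact add_mem hp hq
    | mul_X p i hp => rw [map_mul]; exact mul_mem hp (hT i)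
  -- the range of Psi is inside adjoin SA
  have hRngA : ∀ w : MvPolynomial (Fin m) (MvPolynomial (Fin (m+1)) R),
      Psi F w ∈ Algebra.adjoin R SA := by
    intro w
    induction w using MvPolynomial.induction_on with
    | C p => rw [Psi_C]; exact hphi_mem _ hmemA_xv p
    | add p q hp hq => rw [map_add]; exact add_mem hp hq
    | mul_X w j hw =>
        rw [map_mul]
        rw [Psi_X, ← hxpr j]
        exact mul_mem hw (hmemA_x' _ (Fin.succ_ne_zero j))
  -- L characterization
  have hLchar : ∀ y ∈ Algebra.adjoin R SL, ∃ (p : MvPolynomial (Fin (m+1)) R)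
      (μ : Fin (m+1) →₀ ℕ), μ 0 = 0 ∧ y * phi R m (monomial μ 1) = phi R m p := by
    intro y hy
    induction hy using Algebra.adjoin_induction with
    | mem y hy =>
        rcases hy with hy | hy
        · rw [Set.mem_singleton_iff] at hy
          subst hy
          exact ⟨X 0, 0, rfl, by rw [monomial_zero', map_one, map_one, mul_one]; rfl⟩
        · simp only [Set.mem_iUnion, Set.mem_setOf_eq, Set.mem_insert_iff,
            Set.mem_singleton_iff] at hy
          obtain ⟨i, hi, hy | hy⟩ := hy
          · subst hy
            exact ⟨X i, 0, rfl, by rw [monomial_zero', map_one, map_one, mul_one]; rfl⟩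
          · subst hy
            refine ⟨1, Finsupp.single i 1, Finsupp.single_eq_of_ne' hi, ?_⟩
            rw [show (monomial (Finsupp.single i 1) (1:R)) = X i from rfl, map_one]
            rw [hxv i]
            exact inv_mul_cancel₀ (phiX_ne i)
    | algebraMap r =>
        refine ⟨MvPolynomial.C r, 0, rfl, ?_⟩
        rw [monomial_zero', map_one, map_one, mul_one]
        exact IsScalarTower.algebraMap_apply R (MvPolynomial (Fin (m+1)) R) (AmbientField R (m+1)) r
    | add y z hy hz ihy ihz =>
        obtain ⟨p1, μ1, hμ1, h1⟩ := ihy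
        obtain ⟨p2, μ2, hμ2, h2⟩ := ihz
        refine ⟨p1 * monomial μ2 1 + p2 * monomial μ1 1, μ1 + μ2,
          by rw [Finsupp.add_apply, hμ1, hμ2], ?_⟩
        have hmm : (monomial (μ1 + μ2) (1:R)) = monomial μ1 1 * monomial μ2 1 := by
          rw [monomial_mul, mul_one]
        rw [hmm, map_mul, map_add, map_mul, map_mul]
        calc (y + z) * (phi R m (monomial μ1 1) * phi R m (monomial μ2 1))
            = (y * phi R m (monomial μ1 1)) * phi R m (monomial μ2 1)
              + (z * phi R m (monomial μ2 1)) * phi R m (monomial μ1 1) := by ring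
          _ = _ := by rw [h1, h2]
    | mul y z hy hz ihy ihz =>
        obtain ⟨p1, μ1, hμ1, h1⟩ := ihy
        obtain ⟨p2, μ2, hμ2, h2⟩ := ihz
        refine ⟨p1 * p2, μ1 + μ2, by rw [Finsupp.add_apply, hμ1, hμ2], ?_⟩
        have hmm : (monomial (μ1 + μ2) (1:R)) = monomial μ1 1 * monomial μ2 1 := by
          rw [monomial_mul, mul_one]
        rw [hmm, map_mul, map_mul]
        calc y * z * (phi R m (monomial μ1 1) * phi R m (monomial μ2 1))
            = (y * phi R m (monomial μ1 1)) * (z * phi R m (monomial μ2 1)) := by ring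
          _ = _ := by rw [h1, h2]
  -- U characterization
  have hUchar : ∀ y ∈ Algebra.adjoin R SU, ∃ (N : ℕ)
      (w : MvPolynomial (Fin m) (MvPolynomial (Fin (m+1)) R)),
      (phi R m (X 0)) ^ N * y = Psi F w := by
    intro y hy
    induction hy using Algebra.adjoin_induction with
    | mem y hy =>
        rcases hy with hy | hy
        · simp only [Set.mem_insert_iff, Set.mem_singleton_iff] at hy
          rcases hy with hy | hy
          · subst hy
            exact ⟨0, MvPolynomial.C (X 0), by rw [pow_zero, one_mul, Psi_C]; rfl⟩
          · subst hy
            refine ⟨1, MvPolynomial.C 1, ?_⟩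
            rw [pow_one, Psi_C, map_one, hxv 0]
            exact mul_inv_cancel₀ (phiX_ne 0)
        · simp only [Set.mem_iUnion, Set.mem_setOf_eq, Set.mem_insert_iff,
            Set.mem_singleton_iff] at hy
          obtain ⟨i, hi, hy | hy⟩ := hy
          · subst hy
            exact ⟨0, MvPolynomial.C (X i), by rw [pow_zero, one_mul, Psi_C]; rfl⟩
          · subst hy
            obtain ⟨j, rfl⟩ := Fin.exists_succ_eq_of_ne_zero hi
            refine ⟨0, X j, ?_⟩
            rw [pow_zero, one_mul, hxpr j]
            exact (Psi_X F j).symm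
    | algebraMap r =>
        refine ⟨0, MvPolynomial.C (MvPolynomial.C r), ?_⟩
        rw [pow_zero, one_mul, Psi_C]
        exact IsScalarTower.algebraMap_apply R (MvPolynomial (Fin (m+1)) R) (AmbientField R (m+1)) r
    | add y z hy hz ihy ihz =>
        obtain ⟨N1, w1, h1⟩ := ihy
        obtain ⟨N2, w2, h2⟩ := ihz
        refine ⟨N1 + N2, (MvPolynomial.C (X 0)) ^ N2 * w1
          + (MvPolynomial.C (X 0)) ^ N1 * w2, ?_⟩
        rw [map_add, map_mul, map_mul, map_pow, map_pow, Psi_C, ← h1, ← h2]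
        ring
    | mul y z hy hz ihy ihz =>
        obtain ⟨N1, w1, h1⟩ := ihy
        obtain ⟨N2, w2, h2⟩ := ihz
        refine ⟨N1 + N2, w1 * w2, ?_⟩
        rw [map_mul, ← h1, ← h2]
        ring
  -- key lemma (saturation step)
  have hKL : ∀ y, y ∈ Algebra.adjoin R SL →
      (∃ w, phi R m (X 0) * y = Psi F w) →
      ∃ w, y = Psi F w := by
    intro y hyL ⟨w, hw⟩
    obtain ⟨p, μ, hμ0, hyp⟩ := hLchar y hyL
    set B : Fin m →₀ ℕ := w.support.sup id with hB
    have hsupB : ∀ s ∈ w.support, s ≤ B := fun s hs => Finset.le_sup (f := id) hs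
    have hQ := phi_Qp F w B hsupB
    have hpolyid : Qp F w B * monomial μ 1 = X 0 * p * Xm m R B := by
      apply phi_inj
      rw [map_mul, map_mul, map_mul, hQ, ← hw]
      calc phi R m (X 0) * y * phi R m (Xm m R B) * phi R m (monomial μ 1)
          = phi R m (X 0) * (y * phi R m (monomial μ 1)) * phi R m (Xm m R B) := by ring
        _ = phi R m (X 0) * phi R m p * phi R m (Xm m R B) := by rw [hyp]
    have hdvd : (X 0 : MvPolynomial (Fin (m+1)) R) ∣ Qp F w B := by
      rw [X0_dvd_iff_ev0]
      have := congrArg (ev0 m R) hpolyid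
      rw [map_mul, map_mul, map_mul] at this
      have hev0X0 : ev0 m R (X 0 : MvPolynomial (Fin (m+1)) R) = 0 := by
        rw [← X0_dvd_iff_ev0]
      rw [hev0X0, zero_mul, zero_mul] at this
      have hmono : ev0 m R (monomial μ (1:R)) = monomial μ 1 := by
        rw [ev0_monomial, if_pos hμ0]
      rw [hmono] at this
      have hmne : (monomial μ (1:R)) ≠ 0 := by
        intro h
        have := congrArg (coeff μ) h
        simp [coeff_monomial] at this
      rcases mul_eq_zero.1 this with h | h
      · exact h
      · exact absurd h hmne
    obtain ⟨w2, hw2⟩ := core F v hvmem hvmin hcond2 B w hsupB hdvd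
    exact ⟨w2, mul_left_cancel₀ (phiX_ne (0 : Fin (m+1))) (by rw [hw, hw2])⟩
  -- descent
  have hdesc : ∀ (N : ℕ) (y), y ∈ Algebra.adjoin R SL →
      (∃ w, (phi R m (X 0)) ^ N * y = Psi F w) → ∃ w, y = Psi F w := by
    intro N
    induction N with
    | zero =>
        intro y hy ⟨w, hw⟩
        exact ⟨w, by rw [← hw, pow_zero, one_mul]⟩
    | succ N ih =>
        intro y hy ⟨w, hw⟩
        have hy' : phi R m (X 0) * y ∈ Algebra.adjoin R SL := by
          refine mul_mem ?_ hy
          exact hmemL_xv 0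
        have : ∃ w, (phi R m (X 0)) ^ N * (phi R m (X 0) * y) = Psi F w := by
          refine ⟨w, ?_⟩
          rw [← hw]; ring
        obtain ⟨w1, hw1⟩ := ih (phi R m (X 0) * y) hy' this
        exact hKL y hy ⟨w1, hw1⟩
  -- conclude
  apply le_antisymm
  · intro y hy
    obtain ⟨hyL, hyU⟩ := Algebra.mem_inf.1 hy
    obtain ⟨N, w, hNw⟩ := hUchar y hyU
    obtain ⟨w2, hw2⟩ := hdesc N y hyL ⟨w, hNw⟩
    rw [hw2]
    exact hRngA w2
  · apply le_inf
    · apply Algebra.adjoin_le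
      intro y hy
      rcases hy with hy | hy
      · rw [Set.mem_singleton_iff] at hy
        subst hy
        exact hmemL_xv 0
      · simp only [Set.mem_iUnion, Set.mem_setOf_eq, Set.mem_insert_iff,
          Set.mem_singleton_iff] at hy
        obtain ⟨i, hi, hy | hy⟩ := hy
        · subst hy; exact hmemL_xv i
        · subst hy
          rw [hx' i, div_eq_mul_inv]
          exact mul_mem (hphi_mem _ hmemL_xv (F i)) (hmemL_inv i hi)
    · apply Algebra.adjoin_le
      intro y hy
      apply Algebra.subset_adjoin
      rcases hy with hy | hy
      · rw [Set.mem_singleton_iff] at hy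
        subst hy
        exact Set.mem_union_left _ (Set.mem_insert _ _)
      · exact Set.mem_union_right _ hy
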